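/- Let G be Baumslag's metabelian group, presented as the presented group on three generators a, s, t with relators s⁻¹t⁻¹st, (t⁻¹at)⁻¹a⁻¹(t⁻¹at)a, and s⁻¹as·(a·t⁻¹at)⁻¹. Writing aᵢ := t⁻ⁱatⁱ, for every natural number n one has s⁻ⁿasⁿ = ∏_{i=0}^{n} aᵢ^{C(n,i)} in G, where C(n,i) is the binomial coefficient and the product is taken in increasing order of i. -/

import Mathlib

/-- The three defining relators of Baumslag's metabelian group, on generators
`a = of 0`, `s = of 1`, `t = of 2`:  `[s,t]`, `[aᵗ,a]`, and `aˢ(a·aᵗ)⁻¹`. -/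
def baumslagRels : Set (FreeGroup (Fin 3)) :=
  {(FreeGroup.of 1)⁻¹ * (FreeGroup.of 2)⁻¹ * FreeGroup.of 1 * FreeGroup.of 2,
   ((FreeGroup.of 2)⁻¹ * FreeGroup.of 0 * FreeGroup.of 2)⁻¹ * (FreeGroup.of 0)⁻¹ *
     ((FreeGroup.of 2)⁻¹ * FreeGroup.of 0 * FreeGroup.of 2) * FreeGroup.of 0,
   (FreeGroup.of 1)⁻¹ * FreeGroup.of 0 * FreeGroup.of 1 *
     (FreeGroup.of 0 * ((FreeGroup.of 2)⁻¹ * FreeGroup.of 0 * FreeGroup.of 2))⁻¹}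

/-- Baumslag's finitely presented metabelian group. -/
abbrev BaumslagG := PresentedGroup baumslagRels

/-- The generator `a` of Baumslag's group. -/
def aB : BaumslagG := PresentedGroup.of 0

/-- The generator `s` of Baumslag's group. -/
def sB : BaumslagG := PresentedGroup.of 1

/-- The generator `t` of Baumslag's group. -/
def tB : BaumslagG := PresentedGroup.of 2

namespace BaumslagAux

lemma rel_eq_one {r : FreeGroup (Fin 3)} (h : r ∈ baumslagRels) :
    PresentedGroup.mk baumslagRels r = 1 :=
  (QuotientGroup.eq_one_iff r).mpr (Subgroup.subset_normalClosure h)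

lemma mk0 : PresentedGroup.mk baumslagRels (FreeGroup.of 0) = aB := rfl
lemma mk1 : PresentedGroup.mk baumslagRels (FreeGroup.of 1) = sB := rfl
lemma mk2 : PresentedGroup.mk baumslagRels (FreeGroup.of 2) = tB := rfl

lemma comm_st : Commute sB tB := by
  have h := rel_eq_one (Set.mem_insert _ _)
  simp only [map_mul, map_inv, mk0, mk1, mk2] at h
  have h2 := congrArg (fun z => tB*sB*z) h
  simpa [mul_assoc, Commute, SemiconjBy] using h2

lemma comm_aat : Commute aB (tB⁻¹ * aB * tB) := by
  have h := rel_eq_one (Set.mem_insert_of_mem _ (Set.mem_insert _ _))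
  simp only [map_mul, map_inv, mk0, mk1, mk2] at h
  have h2 := congrArg (fun z => aB * (tB⁻¹ * aB * tB) * z) h
  simpa [mul_assoc, Commute, SemiconjBy] using (h2.symm)

lemma conj_s_a : sB⁻¹ * aB * sB = aB * (tB⁻¹ * aB * tB) := by
  have h := rel_eq_one (show _ ∈ baumslagRels from
    Set.mem_insert_of_mem _ (Set.mem_insert_of_mem _ rfl))
  simp only [map_mul, map_inv, mk0, mk1, mk2] at h
  have h2 := congrArg (fun z => z * (aB * (tB⁻¹ * aB * tB))) h
  simpa [mul_assoc] using h2

/-- `A i = t⁻ⁱ a tⁱ`. -/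
def A (i : ℕ) : BaumslagG := tB ^ (-(i : ℤ)) * aB * tB ^ (i : ℤ)

lemma A_zero : A 0 = aB := by simp [A]

lemma A_one : A 1 = tB⁻¹ * aB * tB := by simp [A]

lemma conjT (i j : ℕ) : (tB ^ (i : ℤ))⁻¹ * A j * tB ^ (i : ℤ) = A (j + i) := by
  simp only [A, Nat.cast_add, neg_add, zpow_add, ← zpow_neg]
  group

lemma comm1 (i : ℕ) : Commute (A i) (A (i + 1)) := by
  have h : Commute (A 0) (A 1) := by rw [A_zero, A_one]; exact comm_aat
  have h2 := h.map (MulAut.conj ((tB ^ (i : ℤ))⁻¹)).toMonoidHom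
  simp only [MulEquiv.coe_toMonoidHom, MulAut.conj_apply, inv_inv, conjT] at h2
  simpa [Nat.add_comm] using h2

lemma conjS (i : ℕ) : sB⁻¹ * A i * sB = A i * A (i + 1) := by
  have hst : Commute (sB⁻¹) (tB ^ (i : ℤ)) := (comm_st.zpow_right _).inv_left
  have h1 : sB⁻¹ * tB ^ (-(i:ℤ)) = tB ^ (-(i:ℤ)) * sB⁻¹ :=
    ((comm_st.zpow_right _).inv_left.symm).eq.symm
  have h2 : tB ^ ((i:ℤ)) * sB = sB * tB ^ ((i:ℤ)) := (comm_st.zpow_right _).eq.symm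
  have : sB⁻¹ * A i * sB = (tB ^ (i:ℤ))⁻¹ * (sB⁻¹ * aB * sB) * tB ^ (i:ℤ) := by
    simp only [A, ← zpow_neg] at *
    rw [← mul_assoc, ← mul_assoc, h1, mul_assoc, mul_assoc, mul_assoc, h2]
    group
  rw [this, conj_s_a, ← A_one, ← A_zero]
  rw [show (tB ^ (i:ℤ))⁻¹ * (A 0 * A 1) * tB ^ (i:ℤ)
      = ((tB ^ (i:ℤ))⁻¹ * A 0 * tB ^ (i:ℤ)) * ((tB ^ (i:ℤ))⁻¹ * A 1 * tB ^ (i:ℤ)) from by group]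
  rw [conjT, conjT, Nat.add_comm 1 i, Nat.zero_add]

end BaumslagAux

namespace BaumslagAux

lemma comm_step {G : Type*} [Group G] (x y z w : G) (hxz : Commute x z) (hyw : Commute y w)
    (hyz : Commute y z) (hconj : Commute (x*y) (z*w)) : Commute x w := by
  have h1 : x*y*(z*w) = z*w*(x*y) := hconj.eq
  have e1 : x*y*(z*w) = x*z*w*y := by
    calc x*y*(z*w) = x*(y*z)*w := by group
    _ = x*(z*y)*w := by rw [hyz.eq]
    _ = x*z*(y*w) := by group
    _ = x*z*(w*y) := by rw [hyw.eq]
    _ = x*z*w*y := by group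
  have e2 : x*z*w*y = z*w*x*y := by rw [← e1, h1]; group
  have e3 : x*z*w = z*w*x := mul_right_cancel e2
  have e4 : z*(x*w) = z*(w*x) := by
    calc z*(x*w) = x*z*w := by rw [← mul_assoc, ← hxz.eq]
    _ = z*w*x := e3
    _ = z*(w*x) := by group
  exact mul_left_cancel e4

lemma comm_gap : ∀ k, ∀ i, Commute (A i) (A (i + k)) := by
  intro k
  induction k using Nat.strong_induction_on with
  | _ k ih =>
    match k with
    | 0 => intro i; simp [Commute.refl]
    | 1 => exact fun i => comm1 i
    | (k+2) =>
      intro i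
      have hxz : Commute (A i) (A (i + (k+1))) := ih (k+1) (by omega) i
      have hyw : Commute (A (i+1)) (A (i + (k+2))) := by
        have := ih (k+1) (by omega) (i+1)
        simpa [show i+1+(k+1) = i + (k+2) by omega] using this
      have hyz : Commute (A (i+1)) (A (i + (k+1))) := by
        have := ih k (by omega) (i+1)
        simpa [show i+1+k = i + (k+1) by omega] using this
      have hconj : Commute (A i * A (i+1)) (A (i+(k+1)) * A (i+(k+2))) := by
        have := hxz.map (MulAut.conj sB⁻¹).toMonoidHom
        simp only [MulEquiv.coe_toMonoidHom, MulAut.conj_apply, inv_inv] at this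
        rw [conjS, show sB⁻¹ * A (i + (k+1)) * sB = A (i+(k+1)) * A (i+(k+2)) from by
          rw [conjS]; ring_nf] at this
        exact this
      exact comm_step _ _ _ _ hxz hyw hyz hconj

lemma comm_all (i j : ℕ) : Commute (A i) (A j) := by
  rcases Nat.le_total i j with h | h
  · obtain ⟨k, rfl⟩ := Nat.exists_eq_add_of_le h
    exact comm_gap k i
  · obtain ⟨k, rfl⟩ := Nat.exists_eq_add_of_le h
    exact (comm_gap k j).symm

end BaumslagAux

namespace BaumslagAux

def Hgrp : Subgroup BaumslagG := Subgroup.closure (Set.range A)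

noncomputable instance : CommGroup Hgrp :=
  Subgroup.closureCommGroupOfComm (by
    rintro x ⟨i, rfl⟩ y ⟨j, rfl⟩
    exact (comm_all i j).eq)

def Ah (i : ℕ) : Hgrp := ⟨A i, Subgroup.subset_closure ⟨i, rfl⟩⟩

lemma list_prod_range {M : Type*} [CommMonoid M] (f : ℕ → M) (n : ℕ) :
    ((List.range n).map f).prod = ∏ i ∈ Finset.range n, f i := by
  induction n with
  | zero => simp
  | succ n ih => rw [List.range_succ, Finset.prod_range_succ, List.map_append]; simp [ih]

lemma pascal {M : Type*} [CommMonoid M] (x : ℕ → M) (n : ℕ) :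
    ∏ i ∈ Finset.range (n+1), (x i * x (i+1)) ^ n.choose i
      = ∏ i ∈ Finset.range (n+2), x i ^ (n+1).choose i := by
  have RHS : ∏ i ∈ Finset.range (n+2), x i ^ (n+1).choose i
      = (∏ i ∈ Finset.range (n+1), (x (i+1) ^ n.choose i * x (i+1) ^ n.choose (i+1))) * x 0 := by
    rw [Finset.prod_range_succ']
    simp [Nat.choose_succ_succ, pow_add]
  have LHS1 : ∏ i ∈ Finset.range (n+1), x i ^ n.choose i
      = (∏ i ∈ Finset.range (n+1), x (i+1) ^ n.choose (i+1)) * x 0 := by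
    rw [Finset.prod_range_succ']
    congr 1
    · rw [Finset.prod_range_succ]
      simp
    · simp
  calc ∏ i ∈ Finset.range (n+1), (x i * x (i+1)) ^ n.choose i
      = (∏ i ∈ Finset.range (n+1), x i ^ n.choose i)
        * ∏ i ∈ Finset.range (n+1), x (i+1) ^ n.choose i := by
        rw [← Finset.prod_mul_distrib]; simp [mul_pow]
    _ = ((∏ i ∈ Finset.range (n+1), x (i+1) ^ n.choose (i+1)) * x 0)
        * ∏ i ∈ Finset.range (n+1), x (i+1) ^ n.choose i := by rw [LHS1]
    _ = (∏ i ∈ Finset.range (n+1), (x (i+1) ^ n.choose i * x (i+1) ^ n.choose (i+1))) * x 0 := by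
        rw [Finset.prod_mul_distrib, mul_right_comm]
        congr 1
        exact mul_comm _ _
    _ = ∏ i ∈ Finset.range (n+2), x i ^ (n+1).choose i := RHS.symm

end BaumslagAux

namespace BaumslagAux

lemma key_list (n : ℕ) :
    ((List.range (n+1)).map fun i => (A i * A (i+1)) ^ n.choose i).prod
      = ((List.range (n+2)).map fun i => A i ^ (n+1).choose i).prod := by
  have e1 : ((List.range (n+1)).map fun i => (A i * A (i+1)) ^ n.choose i).prod
      = Hgrp.subtype (((List.range (n+1)).map fun i => (Ah i * Ah (i+1)) ^ n.choose i).prod) := by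
    rw [map_list_prod, List.map_map]
    congr 1
  have e2 : ((List.range (n+2)).map fun i => A i ^ (n+1).choose i).prod
      = Hgrp.subtype (((List.range (n+2)).map fun i => Ah i ^ (n+1).choose i).prod) := by
    rw [map_list_prod, List.map_map]
    congr 1
  rw [e1, e2]
  congr 1
  exact (list_prod_range _ _).trans ((pascal (fun i => Ah i) n).trans (list_prod_range _ _).symm)

lemma main (n : ℕ) : (sB ^ n)⁻¹ * aB * sB ^ n
    = ((List.range (n+1)).map fun i => A i ^ n.choose i).prod := by
  induction n with
  | zero => simp [List.range_succ, A]
  | succ n ih =>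
    have expand : (sB^(n+1))⁻¹ * aB * sB^(n+1) = sB⁻¹ * ((sB^n)⁻¹ * aB * sB^n) * sB := by
      rw [pow_succ]; group
    rw [expand, ih]
    have conj_prod : sB⁻¹ * (((List.range (n+1)).map fun i => A i ^ n.choose i).prod) * sB
        = ((List.range (n+1)).map fun i => (A i * A (i+1)) ^ n.choose i).prod := by
      have h := map_list_prod (MulAut.conj sB⁻¹).toMonoidHom
        ((List.range (n+1)).map fun i => A i ^ n.choose i)
      simp only [MulEquiv.coe_toMonoidHom, MulAut.conj_apply, inv_inv] at h
      rw [h, List.map_map]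
      congr 1
      apply List.map_congr_left
      intro i _
      simp only [Function.comp_apply, MulAut.conj_apply]
      rw [← conj_pow]
      simp only [inv_inv]
      rw [conjS]
    rw [conj_prod, key_list]

end BaumslagAux


theorem baumslag_s_power_conj (n : ℕ) :
    (sB ^ n)⁻¹ * aB * sB ^ n =
      ((List.range (n + 1)).map fun (i : ℕ) =>
        (tB ^ (-(i : ℤ)) * aB * tB ^ (i : ℤ)) ^ (n.choose i)).prod := by
  exact BaumslagAux.main n
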